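/- Let $K$ be the nerve of the cyclic group of order $2$ (a simplicial model of $\mathbb{RP}^\infty$). Then the normalized chain complex $C_k K$ is free of rank one on a generator $z_k$ for each $k \geq 0$, the differential vanishes after tensoring with $\mathbb{F}_2$, the comultiplication satisfies $\Delta(z_k) = \sum_{i=0}^{k} z_i \otimes z_{k-i}$, and therefore $C_*K \otimes \mathbb{F}_2$ is a cocommutative chain coalgebra. -/

import Mathlib

open TensorProduct

noncomputable section

/-- `n`-simplices of the nerve of the cyclic group `ℤ/2` of order two: tuples in `(ℤ/2)^n`. -/
abbrev NerveZ2 (n : ℕ) : Type := Fin n → ZMod 2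

/-- The face maps of the nerve of the group `ℤ/2` (written additively):
`d₀` drops the first entry, `dₙ` the last, and `dᵢ` adds two adjacent entries. -/
def nerveFace (n : ℕ) (i : ℕ) (σ : NerveZ2 (n + 1)) : NerveZ2 n := fun j =>
  if i = 0 then σ ⟨(j : ℕ) + 1, by have := j.isLt; omega⟩
  else if i ≤ n then
    (if (j : ℕ) + 1 < i then σ ⟨(j : ℕ), by have := j.isLt; omega⟩
     else if (j : ℕ) + 1 = i then
       σ ⟨(j : ℕ), by have := j.isLt; omega⟩ + σ ⟨(j : ℕ) + 1, by have := j.isLt; omega⟩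
     else σ ⟨(j : ℕ) + 1, by have := j.isLt; omega⟩)
  else σ ⟨(j : ℕ), by have := j.isLt; omega⟩

/-- The degeneracy maps of the nerve, inserting the neutral element `0`. -/
def nerveDegen (n : ℕ) (i : ℕ) (hi : i ≤ n) (σ : NerveZ2 n) : NerveZ2 (n + 1) := fun j =>
  if hlt : (j : ℕ) < i then σ ⟨(j : ℕ), by omega⟩
  else if heq : (j : ℕ) = i then 0
  else σ ⟨(j : ℕ) - 1, by have := j.isLt; omega⟩

/-- Degenerate simplices of the nerve. -/
def IsDegen : ∀ n, NerveZ2 n → Prop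
  | 0 => fun _ => False
  | m + 1 => fun σ => ∃ (i : ℕ) (hi : i ≤ m) (τ : NerveZ2 m), σ = nerveDegen m i hi τ

/-- Free abelian group on the `n`-simplices. -/
abbrev Chains (n : ℕ) : Type := NerveZ2 n →₀ ℤ

/-- The subgroup generated by degenerate simplices. -/
def DegSub (n : ℕ) : Submodule ℤ (Chains n) :=
  Submodule.span ℤ {v | ∃ σ, IsDegen n σ ∧ v = Finsupp.single σ 1}

/-- The normalized chains of the nerve of `ℤ/2`: chains modulo degenerate simplices. -/
abbrev NormChains (n : ℕ) : Type := Chains n ⧸ DegSub n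

/-- The class `z_k` of the unique nondegenerate `k`-simplex `(1,1,…,1)`. -/
def zgen (k : ℕ) : NormChains k :=
  Submodule.Quotient.mk (Finsupp.single (fun _ => (1 : ZMod 2)) 1)

/-- The simplicial differential (alternating sum of faces) on unnormalized chains. -/
def Dfree (n : ℕ) : Chains (n + 1) →ₗ[ℤ] Chains n :=
  Finsupp.lift (Chains n) ℤ (NerveZ2 (n + 1))
    (fun σ => ∑ i ∈ Finset.range (n + 2), ((-1 : ℤ) ^ i) • Finsupp.single (nerveFace n i σ) 1)

/-- The `i`-th front face of a `k`-simplex. -/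
def frontFace (i k : ℕ) (h : i ≤ k) (σ : NerveZ2 k) : NerveZ2 i :=
  fun j => σ ⟨(j : ℕ), by have := j.isLt; omega⟩

/-- The `j`-th back face of a `k`-simplex, `i + j = k`. -/
def backFace (i j k : ℕ) (h : i + j = k) (σ : NerveZ2 k) : NerveZ2 j :=
  fun j' => σ ⟨i + (j' : ℕ), by have := j'.isLt; omega⟩

-- ### auxiliary lemmas

lemma zmod2_cases : ∀ x : ZMod 2, x = 0 ∨ x = 1 := by decide

lemma nerveFace_apply (n i : ℕ) (σ : NerveZ2 (n+1)) (a : ℕ) (ha : a < n) :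
    nerveFace n i σ ⟨a, ha⟩ =
      if i = 0 then σ ⟨a + 1, by omega⟩
      else if i ≤ n then
        (if a + 1 < i then σ ⟨a, by omega⟩
         else if a + 1 = i then σ ⟨a, by omega⟩ + σ ⟨a + 1, by omega⟩
         else σ ⟨a + 1, by omega⟩)
      else σ ⟨a, by omega⟩ := rfl

lemma nerveDegen_apply_lt (n i : ℕ) (hi : i ≤ n) (σ : NerveZ2 n) (a : ℕ) (ha : a < n + 1)
    (h : a < i) : nerveDegen n i hi σ ⟨a, ha⟩ = σ ⟨a, by omega⟩ := dif_pos h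

lemma nerveDegen_apply_eq (n i : ℕ) (hi : i ≤ n) (σ : NerveZ2 n) (a : ℕ) (ha : a < n + 1)
    (h : a = i) : nerveDegen n i hi σ ⟨a, ha⟩ = 0 := by
  simp only [nerveDegen, Fin.val_mk]
  rw [dif_neg (by omega), dif_pos h]

lemma nerveDegen_apply_gt (n i : ℕ) (hi : i ≤ n) (σ : NerveZ2 n) (a : ℕ) (ha : a < n + 1)
    (h : i < a) : nerveDegen n i hi σ ⟨a, ha⟩ = σ ⟨a - 1, by omega⟩ := by
  simp only [nerveDegen, Fin.val_mk]
  rw [dif_neg (by omega), dif_neg (by omega)]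

lemma isDegen_iff {n : ℕ} (σ : NerveZ2 n) : IsDegen n σ ↔ ∃ q : Fin n, σ q = 0 := by
  have ceq : ∀ (a b : ℕ) (ha : a < n) (hb : b < n), a = b → σ ⟨a, ha⟩ = σ ⟨b, hb⟩ := by
    intro a b ha hb h; subst h; rfl
  cases n with
  | zero => exact ⟨fun h => h.elim, fun ⟨q, _⟩ => q.elim0⟩
  | succ m =>
    constructor
    · rintro ⟨i, hi, τ, rfl⟩
      exact ⟨⟨i, by omega⟩, nerveDegen_apply_eq m i hi τ i (by omega) rfl⟩
    · rintro ⟨⟨q, hq⟩, h0⟩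
      refine ⟨q, by omega,
        fun j => if (j : ℕ) < q then σ ⟨(j : ℕ), by have := j.isLt; omega⟩
                 else σ ⟨(j : ℕ) + 1, by have := j.isLt; omega⟩, ?_⟩
      funext j
      obtain ⟨a, ha⟩ := j
      rcases Nat.lt_trichotomy a q with h | h | h
      · rw [nerveDegen_apply_lt m q (by omega) _ a ha h]
        dsimp only
        rw [if_pos h]
      · rw [nerveDegen_apply_eq m q (by omega) _ a ha h]
        subst h
        exact h0
      · rw [nerveDegen_apply_gt m q (by omega) _ a ha h]
        dsimp only
        rw [if_neg (by omega)]
        exact ceq _ _ _ _ (by omega)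

lemma mk_degen {n : ℕ} {σ : NerveZ2 n} (h : IsDegen n σ) :
    (Submodule.Quotient.mk (Finsupp.single σ 1) : NormChains n) = 0 := by
  rw [Submodule.Quotient.mk_eq_zero]
  exact Submodule.subset_span ⟨σ, h, rfl⟩

lemma mk_zero_entry {n : ℕ} {σ : NerveZ2 n} (q : Fin n) (h : σ q = 0) :
    (Submodule.Quotient.mk (Finsupp.single σ 1) : NormChains n) = 0 :=
  mk_degen ((isDegen_iff σ).2 ⟨q, h⟩)

def coeffAux (n : ℕ) : Chains n →ₗ[ℤ] ℤ := Finsupp.lapply (fun _ => 1)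

lemma coeff_ker (n : ℕ) : DegSub n ≤ LinearMap.ker (coeffAux n) :=
  Submodule.span_le.mpr (by
    rintro v ⟨σ, hσ, rfl⟩
    simp only [SetLike.mem_coe, LinearMap.mem_ker, coeffAux, Finsupp.lapply_apply]
    rw [Finsupp.single_apply, if_neg]
    intro h
    obtain ⟨q, hq⟩ := (isDegen_iff σ).1 hσ
    rw [h] at hq
    exact one_ne_zero hq)

def coeff (n : ℕ) : NormChains n →ₗ[ℤ] ℤ := (DegSub n).liftQ (coeffAux n) (coeff_ker n)

lemma coeff_zgen (k : ℕ) : coeff k (zgen k) = 1 := by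
  simp [coeff, zgen, coeffAux, Submodule.liftQ_apply]

lemma zgen_torsionfree (k : ℕ) (c : ℤ) (h : c • zgen k = 0) : c = 0 := by
  have := congrArg (coeff k) h
  rw [map_smul, coeff_zgen, map_zero, smul_eq_mul, mul_one] at this
  exact this

lemma span_zgen (k : ℕ) : Submodule.span ℤ {zgen k} = ⊤ := by
  rw [Submodule.eq_top_iff']
  intro x
  obtain ⟨c, rfl⟩ := Submodule.Quotient.mk_surjective _ x
  induction c using Finsupp.induction_linear with
  | zero => simp only [Submodule.Quotient.mk_zero]; exact Submodule.zero_mem _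
  | add f g hf hg =>
    rw [Submodule.Quotient.mk_add]
    exact Submodule.add_mem _ hf hg
  | single σ b =>
    have : Finsupp.single σ b = b • Finsupp.single σ (1 : ℤ) := by
      rw [Finsupp.smul_single', mul_one]
    rw [this, Submodule.Quotient.mk_smul]
    refine Submodule.smul_mem _ _ ?_
    by_cases h : ∃ q, σ q = 0
    · obtain ⟨q, hq⟩ := h
      rw [mk_zero_entry q hq]
      exact Submodule.zero_mem _
    · have : σ = fun _ => (1 : ZMod 2) := by
        funext q
        rcases zmod2_cases (σ q) with h0 | h1
        · exact absurd ⟨q, h0⟩ h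
        · exact h1
      rw [this]
      exact Submodule.subset_span rfl

lemma Dfree_single (n : ℕ) (σ : NerveZ2 (n+1)) :
    Dfree n (Finsupp.single σ 1)
      = ∑ i ∈ Finset.range (n + 2), ((-1:ℤ)^i) • Finsupp.single (nerveFace n i σ) 1 := by
  simp [Dfree, Finsupp.lift_apply, Finsupp.sum_single_index]

def deleteAt {n : ℕ} (q : ℕ) (σ : NerveZ2 (n+1)) : NerveZ2 n := fun j =>
  if (j : ℕ) < q then σ ⟨(j : ℕ), by have := j.isLt; omega⟩
  else σ ⟨(j : ℕ) + 1, by have := j.isLt; omega⟩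

lemma face_q {n : ℕ} (σ : NerveZ2 (n+1)) (q : ℕ) (hq : q < n+1) (h0 : σ ⟨q, hq⟩ = 0) :
    nerveFace n q σ = deleteAt q σ := by
  have key : ∀ (a : ℕ) (ha : a < n+1), a = q → σ ⟨a, ha⟩ = 0 := by
    intro a ha h; subst h; exact h0
  have ceq : ∀ (a b : ℕ) (ha : a < n+1) (hb : b < n+1), a = b → σ ⟨a, ha⟩ = σ ⟨b, hb⟩ := by
    intro a b ha hb h; subst h; rfl
  funext j
  obtain ⟨a, ha⟩ := j
  rw [nerveFace_apply]
  simp only [deleteAt, Fin.val_mk]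
  split_ifs
  all_goals first
    | omega
    | (exfalso; assumption)
    | rfl
    | (exact ceq _ _ _ _ (by omega))
    | (rw [key (a+1) (by omega) (by omega), add_zero] <;> exact ceq _ _ _ _ (by omega))

lemma face_q1 {n : ℕ} (σ : NerveZ2 (n+1)) (q : ℕ) (hq : q < n+1) (h0 : σ ⟨q, hq⟩ = 0) :
    nerveFace n (q+1) σ = deleteAt q σ := by
  have key : ∀ (a : ℕ) (ha : a < n+1), a = q → σ ⟨a, ha⟩ = 0 := by
    intro a ha h; subst h; exact h0
  have ceq : ∀ (a b : ℕ) (ha : a < n+1) (hb : b < n+1), a = b → σ ⟨a, ha⟩ = σ ⟨b, hb⟩ := by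
    intro a b ha hb h; subst h; rfl
  funext j
  obtain ⟨a, ha⟩ := j
  rw [nerveFace_apply]
  simp only [deleteAt, Fin.val_mk]
  split_ifs
  all_goals first
    | omega
    | (exfalso; assumption)
    | rfl
    | (exact ceq _ _ _ _ (by omega))
    | (rw [key a (by omega) (by omega), zero_add] <;> exact ceq _ _ _ _ (by omega))

lemma face_other {n : ℕ} (σ : NerveZ2 (n+1)) (q i : ℕ) (hq : q < n+1) (h0 : σ ⟨q, hq⟩ = 0)
    (hi : i < n+2) (h1 : i ≠ q) (h2 : i ≠ q+1) : ∃ r : Fin n, nerveFace n i σ r = 0 := by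
  have key : ∀ (a : ℕ) (ha : a < n+1), a = q → σ ⟨a, ha⟩ = 0 := by
    intro a ha h; subst h; exact h0
  rcases Nat.lt_or_ge i q with h | h
  · refine ⟨⟨q - 1, by omega⟩, ?_⟩
    rw [nerveFace_apply]
    split_ifs <;> first | omega | (apply key; omega)
  · have h' : q + 1 < i := by omega
    refine ⟨⟨q, by omega⟩, ?_⟩
    rw [nerveFace_apply]
    split_ifs <;> first | omega | (apply key; omega)

lemma Dfree_degen_zero (n : ℕ) {σ : NerveZ2 (n+1)} (hσ : IsDegen (n+1) σ) :
    (DegSub n).mkQ (Dfree n (Finsupp.single σ 1)) = 0 := by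
  obtain ⟨⟨q, hq⟩, h0⟩ := (isDegen_iff σ).1 hσ
  rw [Dfree_single, map_sum]
  simp only [map_smul, Submodule.mkQ_apply]
  rw [← Finset.sum_subset (s₁ := ({q, q+1} : Finset ℕ))
      (by intro x hx; simp only [Finset.mem_insert, Finset.mem_singleton] at hx
          rcases hx with rfl | rfl <;> simp [Finset.mem_range] <;> omega)
      (by intro x hx hxn
          simp only [Finset.mem_insert, Finset.mem_singleton, not_or] at hxn
          obtain ⟨r, hr⟩ := face_other σ q x hq h0 (Finset.mem_range.mp hx) hxn.1 hxn.2
          rw [mk_zero_entry r hr, smul_zero])]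
  rw [Finset.sum_pair (by omega : q ≠ q + 1)]
  rw [face_q σ q hq h0, face_q1 σ q hq h0, pow_succ, mul_neg_one, neg_smul, add_neg_cancel]

def Dbar' (n : ℕ) : NormChains (n+1) →ₗ[ℤ] NormChains n :=
  (DegSub (n+1)).liftQ ((DegSub n).mkQ.comp (Dfree n))
    (Submodule.span_le.mpr (by
      rintro v ⟨σ, hσ, rfl⟩
      simp only [SetLike.mem_coe, LinearMap.mem_ker, LinearMap.comp_apply]
      exact Dfree_degen_zero n hσ))

lemma Dbar'_comp (n : ℕ) :
    (Dbar' n).comp (DegSub (n + 1)).mkQ = (DegSub n).mkQ.comp (Dfree n) :=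
  Submodule.liftQ_mkQ _ _ _

lemma face_const_zero (n : ℕ) : nerveFace n 0 (fun _ => (1:ZMod 2)) = fun _ => 1 := by
  funext j; obtain ⟨a, ha⟩ := j; rw [nerveFace_apply]; simp

lemma face_const_last (n : ℕ) : nerveFace n (n+1) (fun _ => (1:ZMod 2)) = fun _ => 1 := by
  funext j; obtain ⟨a, ha⟩ := j; rw [nerveFace_apply]
  split_ifs <;> first | rfl | omega

lemma face_const_mid (n i : ℕ) (hi1 : 1 ≤ i) (hi2 : i ≤ n) :
    ∃ r : Fin n, nerveFace n i (fun _ => (1:ZMod 2)) r = 0 :=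
  ⟨⟨i - 1, by omega⟩, by
    rw [nerveFace_apply]
    split_ifs <;> first | omega | decide⟩

lemma Dbar'_zgen (n : ℕ) : Dbar' n (zgen (n+1)) = (1 + (-1:ℤ)^(n+1)) • zgen n := by
  have e : zgen (n+1) = (DegSub (n+1)).mkQ (Finsupp.single (fun _ => 1) 1) := rfl
  rw [e, ← LinearMap.comp_apply, Dbar'_comp, LinearMap.comp_apply]
  rw [Dfree_single, map_sum]
  simp only [map_smul, Submodule.mkQ_apply]
  rw [← Finset.sum_subset (s₁ := ({0, n+1} : Finset ℕ))
      (by intro x hx; simp only [Finset.mem_insert, Finset.mem_singleton] at hx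
          rcases hx with rfl | rfl <;> exact Finset.mem_range.mpr (by omega))
      (by intro x hx hxn
          simp only [Finset.mem_insert, Finset.mem_singleton, not_or] at hxn
          have hxr := Finset.mem_range.mp hx
          obtain ⟨r, hr⟩ := face_const_mid n x (by omega) (by omega)
          rw [mk_zero_entry r hr, smul_zero])]
  rw [Finset.sum_pair (by omega : (0:ℕ) ≠ n+1)]
  rw [face_const_zero, face_const_last, pow_zero, one_smul, add_smul, one_smul]
  rfl

lemma Dbar'_two (n : ℕ) : ∃ w : NormChains n, Dbar' n (zgen (n+1)) = (2:ℤ) • w := by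
  rw [Dbar'_zgen]
  rcases Nat.even_or_odd (n+1) with h | h
  · exact ⟨zgen n, by rw [h.neg_one_pow]; norm_num⟩
  · exact ⟨0, by rw [h.neg_one_pow]; norm_num⟩

def AWfree (i j k : ℕ) (h : i + j = k) : Chains k →ₗ[ℤ] NormChains i ⊗[ℤ] NormChains j :=
  Finsupp.lift (NormChains i ⊗[ℤ] NormChains j) ℤ (NerveZ2 k) (fun σ =>
    (Submodule.Quotient.mk (Finsupp.single (frontFace i k (Nat.le.intro h) σ) 1) : NormChains i) ⊗ₜ[ℤ]
    (Submodule.Quotient.mk (Finsupp.single (backFace i j k h σ) 1) : NormChains j))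

lemma AWfree_single (i j k : ℕ) (h : i + j = k) (σ : NerveZ2 k) :
    AWfree i j k h (Finsupp.single σ 1) =
      (Submodule.Quotient.mk (Finsupp.single (frontFace i k (Nat.le.intro h) σ) 1) : NormChains i) ⊗ₜ[ℤ]
      (Submodule.Quotient.mk (Finsupp.single (backFace i j k h σ) 1) : NormChains j) := by
  simp [AWfree, Finsupp.lift_apply, Finsupp.sum_single_index]

lemma AWfree_degen_zero (i j k : ℕ) (h : i + j = k) {σ : NerveZ2 k} (hσ : IsDegen k σ) :
    AWfree i j k h (Finsupp.single σ 1) = 0 := by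
  obtain ⟨⟨q, hq⟩, h0⟩ := (isDegen_iff σ).1 hσ
  have key : ∀ (a : ℕ) (ha : a < k), a = q → σ ⟨a, ha⟩ = 0 := by
    intro a ha e; subst e; exact h0
  rw [AWfree_single]
  rcases Nat.lt_or_ge q i with hlt | hge
  · have hz : frontFace i k (Nat.le.intro h) σ ⟨q, hlt⟩ = 0 := key q (by omega) rfl
    rw [mk_zero_entry _ hz, zero_tmul]
  · have hb : q - i < j := by omega
    have hz : backFace i j k h σ ⟨q - i, hb⟩ = 0 := key (i + (q - i)) (by omega) (by omega)
    rw [mk_zero_entry _ hz, tmul_zero]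

def Δbar' (i j k : ℕ) (h : i + j = k) : NormChains k →ₗ[ℤ] NormChains i ⊗[ℤ] NormChains j :=
  (DegSub k).liftQ (AWfree i j k h)
    (Submodule.span_le.mpr (by
      rintro v ⟨σ, hσ, rfl⟩
      simp only [SetLike.mem_coe, LinearMap.mem_ker]
      exact AWfree_degen_zero i j k h hσ))

lemma Δbar'_mk (i j k : ℕ) (h : i + j = k) (σ : NerveZ2 k) :
    Δbar' i j k h (Submodule.Quotient.mk (Finsupp.single σ 1))
      = (Submodule.Quotient.mk
            (Finsupp.single (frontFace i k (Nat.le.intro h) σ) 1) : NormChains i) ⊗ₜ[ℤ]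
        (Submodule.Quotient.mk (Finsupp.single (backFace i j k h σ) 1) : NormChains j) :=
  (Submodule.liftQ_apply _ _ _).trans (AWfree_single i j k h σ)

lemma Δbar'_zgen (i j k : ℕ) (h : i + j = k) :
    Δbar' i j k h (zgen k) = zgen i ⊗ₜ[ℤ] zgen j :=
  Δbar'_mk i j k h (fun _ => 1)

lemma cocomm (i j k : ℕ) (h : i + j = k) (h' : j + i = k) :
    ∃ w : NormChains i ⊗[ℤ] NormChains j,
      (TensorProduct.comm ℤ (NormChains j) (NormChains i)).toLinearMap
          (Δbar' j i k h' (zgen k))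
        - ((-1:ℤ)^(i*j)) • Δbar' i j k h (zgen k) = (2:ℤ) • w := by
  rw [Δbar'_zgen, Δbar'_zgen]
  simp only [LinearEquiv.coe_coe, TensorProduct.comm_tmul]
  rcases Nat.even_or_odd (i*j) with he | ho
  · exact ⟨0, by rw [he.neg_one_pow, one_smul, sub_self, smul_zero]⟩
  · exact ⟨zgen i ⊗ₜ[ℤ] zgen j, by
      rw [ho.neg_one_pow, neg_one_smul, sub_neg_eq_add, ← two_smul ℤ]⟩


/-- Let `K` be the nerve of the cyclic group of order `2` (a simplicial
model of `ℝP^∞`).  Then the normalized chain complex `C_k K` is free of rank one on the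
generator `z_k` (the class of `(1,…,1)`), the differential vanishes after tensoring with
`𝔽₂` (indeed `d z_{k+1} = (1 + (-1)^{k+1}) z_k`), the Alexander–Whitney comultiplication
satisfies `Δ(z_k) = ∑_{i=0}^k z_i ⊗ z_{k-i}`, and therefore `C_*K ⊗ 𝔽₂` is a cocommutative
chain coalgebra. -/
theorem nerve_z2_normalized_chains :
    -- `C_k K` is free of rank one on `z_k`
    (∀ k, Submodule.span ℤ {zgen k} = ⊤ ∧ ∀ c : ℤ, c • zgen k = 0 → c = 0) ∧
    -- the induced differential, and its vanishing mod 2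
    (∃ Dbar : ∀ n, NormChains (n + 1) →ₗ[ℤ] NormChains n,
      (∀ n, (Dbar n).comp (DegSub (n + 1)).mkQ = (DegSub n).mkQ.comp (Dfree n)) ∧
      (∀ n, Dbar n (zgen (n + 1)) = ((1 + (-1 : ℤ) ^ (n + 1))) • zgen n) ∧
      (∀ n, ∃ w : NormChains n, Dbar n (zgen (n + 1)) = (2 : ℤ) • w)) ∧
    -- the Alexander–Whitney comultiplication and its cocommutativity mod 2
    (∃ Δbar : ∀ i j k : ℕ, i + j = k → NormChains k →ₗ[ℤ] NormChains i ⊗[ℤ] NormChains j,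
      (∀ (i j k : ℕ) (h : i + j = k) (σ : NerveZ2 k),
        Δbar i j k h (Submodule.Quotient.mk (Finsupp.single σ 1))
          = (Submodule.Quotient.mk
                (Finsupp.single (frontFace i k (by omega) σ) 1) : NormChains i) ⊗ₜ[ℤ]
            (Submodule.Quotient.mk (Finsupp.single (backFace i j k h σ) 1) : NormChains j)) ∧
      (∀ (i j k : ℕ) (h : i + j = k), Δbar i j k h (zgen k) = zgen i ⊗ₜ[ℤ] zgen j) ∧
      (∀ (i j k : ℕ) (h : i + j = k) (h' : j + i = k),
        ∃ w : NormChains i ⊗[ℤ] NormChains j,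
          (TensorProduct.comm ℤ (NormChains j) (NormChains i)).toLinearMap
              (Δbar j i k h' (zgen k))
            - ((-1 : ℤ) ^ (i * j)) • Δbar i j k h (zgen k) = (2 : ℤ) • w)) :=
  ⟨fun k => ⟨span_zgen k, zgen_torsionfree k⟩,
   ⟨Dbar', Dbar'_comp, Dbar'_zgen, Dbar'_two⟩,
   ⟨Δbar', Δbar'_mk, Δbar'_zgen, cocomm⟩⟩

end
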